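/- arXiv:0709.2056 — 2 statements merged into one kernel-verified Lean document; each statement's English description precedes it below -/
import Mathlib

section
/- Let s : (0,1] → ℝ be measurable and define u(x) = s(‖x‖)·x^⊥ on the open unit disk D, and p₀(x) = −∫_{‖x‖}^{1} ρ·s(ρ)² dρ. If u ∈ L²(D), then p₀ ∈ L¹(D) and ‖p₀‖_{L¹(D)} ≤ (1/2)·‖u‖²_{L²(D)}. -/
open Metric Set MeasureTheory Filter Real
open scoped RealInnerProductSpace MeasureTheory ENNReal

noncomputable section

/-- The plane `ℝ²`, as a Euclidean space. -/
abbrev E2 := EuclideanSpace ℝ (Fin 2)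

/-- Counterclockwise rotation of `x` by `90°`:  `x^⊥ = (-x₂, x₁)`. -/
def perp (x : E2) : E2 := WithLp.toLp 2 ![-(x 1), x 0]

open Module in
theorem lintegral_fun_norm_addHaar' {E : Type*} [NormedAddCommGroup E] [NormedSpace ℝ E]
    [MeasurableSpace E] [BorelSpace E] [FiniteDimensional ℝ E] [Nontrivial E]
    (μ : Measure E) [μ.IsAddHaarMeasure] (f : ℝ → ℝ≥0∞) (hf : Measurable f) :
    ∫⁻ x, f ‖x‖ ∂μ = (finrank ℝ E) * μ (ball 0 1) *
      ∫⁻ y in Ioi (0:ℝ), ENNReal.ofReal (y ^ (finrank ℝ E - 1)) * f y := by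
  have h1 : ∫⁻ x, f ‖x‖ ∂μ = ∫⁻ x : ({(0:E)}ᶜ : Set E), f ‖x.1‖ ∂(μ.comap (↑)) := by
    rw [lintegral_subtype_comap (measurableSet_singleton _).compl fun x => f ‖x‖,
      MeasureTheory.restrict_compl_singleton]
  have h2 : ∫⁻ x : ({(0:E)}ᶜ : Set E), f ‖x.1‖ ∂(μ.comap (↑))
      = ∫⁻ p : sphere (0:E) 1 × Ioi (0:ℝ), f p.2
          ∂(μ.toSphere.prod (.volumeIoiPow (finrank ℝ E - 1))) := by
    have h := μ.measurePreserving_homeomorphUnitSphereProd.lintegral_comp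
      (hf.comp (measurable_subtype_coe.comp measurable_snd))
    simpa only [Function.comp_apply, homeomorphUnitSphereProd_apply_snd_coe] using h
  have h3 : ∫⁻ p : sphere (0:E) 1 × Ioi (0:ℝ), f p.2
        ∂(μ.toSphere.prod (.volumeIoiPow (finrank ℝ E - 1)))
      = (∫⁻ y : Ioi (0:ℝ), f y ∂(Measure.volumeIoiPow (finrank ℝ E - 1))) * μ.toSphere univ := by
    rw [lintegral_prod (fun p : sphere (0:E) 1 × Ioi (0:ℝ) => f p.2)
      ((show Measurable fun p : sphere (0:E) 1 × Ioi (0:ℝ) => f p.2 by fun_prop).aemeasurable)]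
    simp [lintegral_const, mul_comm]
  have h4 : ∫⁻ y : Ioi (0:ℝ), f y ∂(Measure.volumeIoiPow (finrank ℝ E - 1))
      = ∫⁻ y in Ioi (0:ℝ), ENNReal.ofReal (y ^ (finrank ℝ E - 1)) * f y := by
    rw [Measure.volumeIoiPow, lintegral_withDensity_eq_lintegral_mul _
      ((measurable_subtype_coe.pow_const _).ennreal_ofReal)
      (show Measurable fun y : Ioi (0:ℝ) => f y from hf.comp measurable_subtype_coe)]
    simp only [Pi.mul_apply]
    rw [lintegral_subtype_comap measurableSet_Ioi
      (fun y : ℝ => ENNReal.ofReal (y ^ (finrank ℝ E - 1)) * f y)]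
  rw [h1, h2, h3, h4, Measure.toSphere_apply_univ]
  ring

theorem norm_perp (x : E2) : ‖perp x‖ = ‖x‖ := by
  simp [perp, EuclideanSpace.norm_eq, Fin.sum_univ_two, add_comm]

theorem lintegral_ball_E2 (g : ℝ → ℝ≥0∞) (hg : Measurable g) :
    ∫⁻ x in ball (0:E2) 1, g ‖x‖ =
      2 * volume (ball (0:E2) 1) * ∫⁻ y in Ioo (0:ℝ) 1, ENNReal.ofReal y * g y := by
  have h1 : ∫⁻ x in ball (0:E2) 1, g ‖x‖
      = ∫⁻ x : E2, ((Iio (1:ℝ)).indicator g) ‖x‖ := by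
    rw [← lintegral_indicator measurableSet_ball]
    congr 1
    funext x
    by_cases h : ‖x‖ < 1 <;>
      simp [Set.indicator_apply, mem_ball_zero_iff, h]
  rw [h1, lintegral_fun_norm_addHaar' volume _ (hg.indicator measurableSet_Iio)]
  rw [finrank_euclideanSpace_fin]
  have h2 : ∫⁻ y in Ioi (0:ℝ), ENNReal.ofReal (y ^ (2-1)) * (Iio (1:ℝ)).indicator g y
      = ∫⁻ y in Ioo (0:ℝ) 1, ENNReal.ofReal y * g y := by
    have : ∀ y : ℝ, ENNReal.ofReal (y ^ (2-1)) * (Iio (1:ℝ)).indicator g y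
        = (Iio (1:ℝ)).indicator (fun y => ENNReal.ofReal y * g y) y := by
      intro y
      by_cases h : y ∈ Iio (1:ℝ) <;> simp [Set.indicator_apply, h]
    simp only [this]
    rw [lintegral_indicator measurableSet_Iio, Measure.restrict_restrict measurableSet_Iio,
      Set.Iio_inter_Ioi]
  rw [h2]
  push_cast
  ring

/-- If `u x = s(‖x‖) • x^⊥` is square integrable on the unit disk `D` and
`p₀ x = - ∫_{‖x‖}^1 ρ s(ρ)² dρ`, then `p₀ ∈ L¹(D)` with
`‖p₀‖_{L¹(D)} ≤ (1/2) ‖u‖²_{L²(D)}`. -/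
theorem stmt4 (s : ℝ → ℝ) (hs : Measurable s)
    (u : E2 → E2) (hu : ∀ x : E2, u x = s ‖x‖ • perp x)
    (p₀ : E2 → ℝ) (hp : ∀ x : E2, p₀ x = -∫ ρ in (‖x‖)..1, ρ * (s ρ)^2)
    (hL2 : MemLp u 2 (volume.restrict (ball (0:E2) 1))) :
    IntegrableOn p₀ (ball (0:E2) 1)
    ∧ (∫ x in ball (0:E2) 1, |p₀ x|) ≤ (1/2) * ∫ x in ball (0:E2) 1, ‖u x‖^2 := by
  set V : ℝ≥0∞ := volume (ball (0:E2) 1) with hV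
  have hV0 : V ≠ 0 := (measure_ball_pos _ _ one_pos).ne'
  have hVtop : V ≠ ⊤ := measure_ball_lt_top.ne
  set w : ℝ → ℝ := fun ρ => ρ * s ρ ^ 2 with hw
  have hwm : Measurable w := measurable_id.mul (hs.pow_const 2)
  set W : ℝ → ℝ≥0∞ := fun ρ => ENNReal.ofReal (w ρ) with hWdef
  have hWm : Measurable W := hwm.ennreal_ofReal
  set gu : ℝ → ℝ≥0∞ := fun y => ENNReal.ofReal (y ^ 2 * s y ^ 2) with hgud
  have hgum : Measurable gu := ((measurable_id.pow_const 2).mul (hs.pow_const 2)).ennreal_ofReal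
  set G : ℝ → ℝ≥0∞ := fun y => ∫⁻ ρ in Ioc y 1, W ρ with hGdef
  have hGanti : Antitone G := fun a b hab =>
    lintegral_mono' (Measure.restrict_mono (Ioc_subset_Ioc_left hab) le_rfl) le_rfl
  have hGm : Measurable G := hGanti.measurable
  -- the radial profile of ‖u‖²
  have hnu : ∀ x : E2, ‖u x‖ ^ 2 = ‖x‖ ^ 2 * s ‖x‖ ^ 2 := by
    intro x
    rw [hu x, norm_smul, norm_perp, mul_pow, Real.norm_eq_abs, sq_abs]
    ring
  set Iu : ℝ≥0∞ := ∫⁻ y in Ioo (0:ℝ) 1, ENNReal.ofReal y * gu y with hIud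
  have hLu : ∫⁻ x in ball (0:E2) 1, ENNReal.ofReal (‖u x‖ ^ 2) = 2 * V * Iu := by
    have h : ∀ x : E2, ENNReal.ofReal (‖u x‖ ^ 2) = gu ‖x‖ := fun x => by
      rw [hnu x]
    simp only [h]
    exact lintegral_ball_E2 gu hgum
  have hInt_u : Integrable (fun x => ‖u x‖ ^ 2) (volume.restrict (ball (0:E2) 1)) := by
    have := hL2.integrable_norm_rpow two_ne_zero ENNReal.ofNat_ne_top
    simpa [ENNReal.toReal_ofNat, Real.rpow_natCast] using this
  have hLu_lt : ∫⁻ x in ball (0:E2) 1, ENNReal.ofReal (‖u x‖ ^ 2) < ⊤ :=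
    hInt_u.lintegral_lt_top
  have h2V : (2 * V : ℝ≥0∞) ≠ 0 := by simp [hV0]
  have h2Vtop : (2 * V : ℝ≥0∞) ≠ ⊤ := by
    exact ENNReal.mul_ne_top (by norm_num) hVtop
  have hIu_ne : Iu ≠ ⊤ := by
    intro h
    rw [hLu, h, ENNReal.mul_top h2V] at hLu_lt
    exact (lt_irrefl _ hLu_lt).elim
  -- integrability of w on Ioc r 1 and finiteness of G r, for 0 < r < 1
  have key : ∀ r : ℝ, r ∈ Ioo (0:ℝ) 1 → G r ≠ ⊤ ∧ IntegrableOn w (Ioc r 1) volume := by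
    intro r hr
    have hGle : G r ≤ ENNReal.ofReal (r⁻¹ ^ 2) * Iu := by
      have hle : ∀ ρ ∈ Ioc r 1, W ρ ≤ ENNReal.ofReal (r⁻¹ ^ 2) * (ENNReal.ofReal ρ * gu ρ) := by
        intro ρ hρ
        have hρ0 : 0 < ρ := lt_trans hr.1 hρ.1
        rw [hgud, ← ENNReal.ofReal_mul hρ0.le, ← ENNReal.ofReal_mul (by positivity)]
        apply ENNReal.ofReal_le_ofReal
        have hwnn : 0 ≤ w ρ := mul_nonneg hρ0.le (sq_nonneg _)
        have hinv : (1:ℝ) ≤ r⁻¹ * ρ := by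
          rw [inv_mul_eq_div]; exact (one_le_div hr.1).2 hρ.1.le
        have h2 : (1:ℝ) ≤ r⁻¹ ^ 2 * ρ ^ 2 := by rw [← mul_pow]; nlinarith [hinv]
        calc w ρ = 1 * w ρ := (one_mul _).symm
          _ ≤ (r⁻¹ ^ 2 * ρ ^ 2) * w ρ := mul_le_mul_of_nonneg_right h2 hwnn
          _ = r⁻¹ ^ 2 * (ρ * (ρ ^ 2 * s ρ ^ 2)) := by rw [hw]; ring
      calc G r ≤ ∫⁻ ρ in Ioc r 1, ENNReal.ofReal (r⁻¹ ^ 2) * (ENNReal.ofReal ρ * gu ρ) :=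
            setLIntegral_mono (by fun_prop) hle
        _ = ENNReal.ofReal (r⁻¹ ^ 2) * ∫⁻ ρ in Ioc r 1, ENNReal.ofReal ρ * gu ρ :=
            lintegral_const_mul _ (by fun_prop)
        _ ≤ ENNReal.ofReal (r⁻¹ ^ 2) * ∫⁻ ρ in Ioc 0 1, ENNReal.ofReal ρ * gu ρ := by
            gcongr
            exact hr.1.le
        _ = ENNReal.ofReal (r⁻¹ ^ 2) * Iu := by
            rw [hIud, setLIntegral_congr (Ioo_ae_eq_Ioc (a := (0:ℝ)) (b := 1))]
    have hGfin : G r ≠ ⊤ := by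
      intro h
      rw [h] at hGle
      exact absurd (hGle.trans_lt (ENNReal.mul_lt_top ENNReal.ofReal_lt_top hIu_ne.lt_top))
        (lt_irrefl _)
    refine ⟨hGfin, ?_⟩
    refine ⟨hwm.aestronglyMeasurable, ?_⟩
    rw [hasFiniteIntegral_iff_ofReal ?_]
    · exact hGfin.lt_top
    · filter_upwards [ae_restrict_mem measurableSet_Ioc] with ρ hρ
      exact mul_nonneg (lt_trans hr.1 hρ.1).le (sq_nonneg _)
  -- pointwise identities for p₀
  have hp₀ : ∀ x : E2, ‖x‖ ∈ Ioo (0:ℝ) 1 →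
      ENNReal.ofReal |p₀ x| = G ‖x‖ ∧ p₀ x = -(G ‖x‖).toReal := by
    intro x hx
    set r := ‖x‖
    have hint := (key r hx).2
    have hnn : 0 ≤ᵐ[volume.restrict (Ioc r 1)] w := by
      filter_upwards [ae_restrict_mem measurableSet_Ioc] with ρ hρ
      exact mul_nonneg (lt_trans hx.1 hρ.1).le (sq_nonneg _)
    have hofReal : ENNReal.ofReal (∫ ρ in Ioc r 1, w ρ) = G r :=
      ofReal_integral_eq_lintegral_ofReal hint hnn
    have hIRnn : 0 ≤ ∫ ρ in Ioc r 1, w ρ :=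
      setIntegral_nonneg measurableSet_Ioc fun ρ hρ =>
        mul_nonneg (lt_trans hx.1 hρ.1).le (sq_nonneg _)
    have hpx : p₀ x = -∫ ρ in Ioc r 1, w ρ := by
      rw [hp x, intervalIntegral.integral_of_le hx.2.le]
    constructor
    · rw [hpx, abs_neg, abs_of_nonneg hIRnn, hofReal]
    · rw [hpx, ← hofReal, ENNReal.toReal_ofReal hIRnn]
  have hae : ∀ᵐ x ∂(volume.restrict (ball (0:E2) 1)), ‖x‖ ∈ Ioo (0:ℝ) 1 := by
    have h1 : ∀ᵐ x : E2 ∂volume, x ≠ 0 := by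
      rw [ae_iff]
      simpa using measure_singleton (0:E2)
    filter_upwards [ae_restrict_mem measurableSet_ball, ae_restrict_of_ae h1] with x hx hx0
    exact ⟨norm_pos_iff.2 hx0, mem_ball_zero_iff.1 hx⟩
  have hp₀m : AEStronglyMeasurable p₀ (volume.restrict (ball (0:E2) 1)) := by
    have hmg : Measurable fun x : E2 => -(G ‖x‖).toReal :=
      ((hGm.comp measurable_norm).ennreal_toReal).neg
    refine hmg.aestronglyMeasurable.congr ?_
    filter_upwards [hae] with x hx
    exact ((hp₀ x hx).2).symm
  set Ip : ℝ≥0∞ := ∫⁻ y in Ioo (0:ℝ) 1, ENNReal.ofReal y * G y with hIpd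
  have hLp : ∫⁻ x in ball (0:E2) 1, ENNReal.ofReal |p₀ x| = 2 * V * Ip := by
    have h1 : ∫⁻ x in ball (0:E2) 1, ENNReal.ofReal |p₀ x|
        = ∫⁻ x in ball (0:E2) 1, G ‖x‖ := by
      apply lintegral_congr_ae
      filter_upwards [hae] with x hx
      exact (hp₀ x hx).1
    rw [h1, lintegral_ball_E2 G hGm]
  -- Tonelli
  set S : Set (ℝ × ℝ) := {p : ℝ × ℝ | p.1 < p.2 ∧ p.2 ≤ 1} with hSdef
  have hSm : MeasurableSet S := by
    apply MeasurableSet.inter (measurableSet_lt measurable_fst measurable_snd)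
    exact measurable_snd measurableSet_Iic
  set Φ : ℝ → ℝ → ℝ≥0∞ := fun y ρ =>
    S.indicator (fun p => ENNReal.ofReal p.1 * W p.2) (y, ρ) with hΦdef
  have hstepA : ∀ y : ℝ, ENNReal.ofReal y * G y = ∫⁻ ρ, Φ y ρ := by
    intro y
    have h1 : ∀ ρ : ℝ, Φ y ρ = (Ioc y 1).indicator (fun ρ => ENNReal.ofReal y * W ρ) ρ := by
      intro ρ
      simp only [hΦdef, hSdef, Set.indicator_apply, mem_setOf_eq, mem_Ioc]
    simp only [h1]
    rw [lintegral_indicator measurableSet_Ioc, hGdef,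
      lintegral_const_mul _ hWm]
  have hswap : Ip = ∫⁻ ρ, ∫⁻ y in Ioo (0:ℝ) 1, Φ y ρ := by
    rw [hIpd]
    simp only [hstepA]
    exact lintegral_lintegral_swap
      (((measurable_fst.ennreal_ofReal.mul (hWm.comp measurable_snd)).indicator hSm).aemeasurable)
  have hstepC : ∀ ρ : ℝ, ∫⁻ y in Ioo (0:ℝ) 1, Φ y ρ
      = (Ioc (0:ℝ) 1).indicator (fun t => ENNReal.ofReal (t ^ 2 / 2) * W t) ρ := by
    intro ρ
    by_cases hρ1 : ρ ≤ 1
    · have hΦ : ∀ y : ℝ, Φ y ρ = (Iio ρ).indicator (fun y => ENNReal.ofReal y * W ρ) y := by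
        intro y
        simp only [hΦdef, hSdef, Set.indicator_apply, mem_setOf_eq, mem_Iio, hρ1, and_true]
      simp only [hΦ]
      rw [lintegral_indicator measurableSet_Iio, Measure.restrict_restrict measurableSet_Iio]
      have hset : Iio ρ ∩ Ioo (0:ℝ) 1 = Ioo 0 ρ := by
        ext z
        simp only [mem_inter_iff, mem_Iio, mem_Ioo]
        constructor
        · rintro ⟨h1, h2, h3⟩; exact ⟨h2, h1⟩
        · rintro ⟨h1, h2⟩; exact ⟨h2, h1, lt_of_lt_of_le h2 hρ1⟩
      rw [hset, lintegral_mul_const _ ENNReal.measurable_ofReal]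
      by_cases hρ0 : 0 < ρ
      · have hcalc : ∫⁻ y in Ioo (0:ℝ) ρ, ENNReal.ofReal y = ENNReal.ofReal (ρ ^ 2 / 2) := by
          rw [← ofReal_integral_eq_lintegral_ofReal]
          · congr 1
            rw [Measure.restrict_congr_set Ioo_ae_eq_Ioc,
              ← intervalIntegral.integral_of_le hρ0.le, integral_id]
            ring
          · exact (intervalIntegral.intervalIntegrable_id (μ := volume) (a := 0) (b := ρ)).1.mono_set
              Ioo_subset_Ioc_self
          · filter_upwards [ae_restrict_mem measurableSet_Ioo] with z hz
            exact hz.1.le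
        rw [hcalc, Set.indicator_of_mem (mem_Ioc.mpr ⟨hρ0, hρ1⟩)]
      · have : Ioo (0:ℝ) ρ = ∅ := Ioo_eq_empty (by simpa using hρ0)
        rw [this, Set.indicator_of_notMem (fun h => hρ0 (mem_Ioc.mp h).1)]
        simp
    · have hΦ : ∀ y : ℝ, Φ y ρ = 0 := by
        intro y
        apply Set.indicator_of_notMem
        simp only [hSdef, mem_setOf_eq, not_and]
        intro _; exact hρ1
      simp only [hΦ]
      rw [Set.indicator_of_notMem (fun h => hρ1 (mem_Ioc.mp h).2)]
      simp
  have hIp_eq : Ip = ENNReal.ofReal (1/2) * Iu := by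
    rw [hswap]
    simp only [hstepC]
    rw [lintegral_indicator measurableSet_Ioc,
      setLIntegral_congr (Filter.EventuallyEq.symm (Ioo_ae_eq_Ioc (a := (0:ℝ)) (b := 1)))]
    rw [hIud, ← lintegral_const_mul _ (by fun_prop : Measurable fun y : ℝ => ENNReal.ofReal y * gu y)]
    apply setLIntegral_congr_fun measurableSet_Ioo
    intro ρ hρ
    rw [hWdef, hgud, hw]
    simp only
    rw [← ENNReal.ofReal_mul (by positivity), ← ENNReal.ofReal_mul hρ.1.le,
      ← ENNReal.ofReal_mul (by norm_num)]
    congr 1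
    ring
  -- finiteness
  have hLp_fin : (2 * V * Ip : ℝ≥0∞) ≠ ⊤ := by
    rw [hIp_eq, ← mul_assoc]
    exact ENNReal.mul_ne_top (ENNReal.mul_ne_top h2Vtop ENNReal.ofReal_ne_top)
      hIu_ne
  -- integrability of p₀
  have habs_m : AEStronglyMeasurable (fun x => |p₀ x|) (volume.restrict (ball (0:E2) 1)) := by
    simpa [Real.norm_eq_abs] using hp₀m.norm
  have hfin : ∫⁻ x in ball (0:E2) 1, ENNReal.ofReal |p₀ x| < ⊤ := by
    rw [hLp]; exact hLp_fin.lt_top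
  have hIntp : IntegrableOn p₀ (ball (0:E2) 1) := by
    refine ⟨hp₀m, ?_⟩
    have h1 : HasFiniteIntegral (fun x => |p₀ x|) (volume.restrict (ball (0:E2) 1)) :=
      (hasFiniteIntegral_iff_ofReal (ae_of_all _ fun x => abs_nonneg _)).2 hfin
    have h2 := (hasFiniteIntegral_norm_iff p₀).1 (by simpa [Real.norm_eq_abs] using h1)
    exact h2
  refine ⟨hIntp, ?_⟩
  -- final computation
  have hlhs : ∫ x in ball (0:E2) 1, |p₀ x| = (2 * V * Ip).toReal := by
    rw [integral_eq_lintegral_of_nonneg_ae (ae_of_all _ fun x => abs_nonneg _) habs_m, hLp]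
  have hrhs : ∫ x in ball (0:E2) 1, ‖u x‖ ^ 2 = (2 * V * Iu).toReal := by
    rw [integral_eq_lintegral_of_nonneg_ae (ae_of_all _ fun x => sq_nonneg _)
      hInt_u.aestronglyMeasurable, hLu]
  rw [hlhs, hrhs]
  have hLu_ne : (2 * V * Iu : ℝ≥0∞) ≠ ⊤ := by
    rw [← hLu]; exact hLu_lt.ne
  have : (2 * V * Ip : ℝ≥0∞) = ENNReal.ofReal (1/2) * (2 * V * Iu) := by
    rw [hIp_eq]; ring
  rw [this, ENNReal.toReal_mul, ENNReal.toReal_ofReal (by norm_num)]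
end
end

section
/- Let H(t,x,y) := (4πt)^{-1}·exp(−‖x−y‖²/(4t)) and let N(t,x,y) := y·∇_y H(t,x,y) for t > 0. There is a constant C > 0 such that for every t > 0 and every x ∈ ℝ² with ‖x‖ ≤ 1, ∫_{S¹} |N(t,x,y)| dσ(y) ≤ C·t^{-1}, where σ is arclength measure on the unit circle S¹. -/
open Metric Set MeasureTheory Filter Real
open scoped RealInnerProductSpace MeasureTheory

noncomputable section

/-- The two-dimensional heat kernel `H(t,x,y) = (4πt)⁻¹ exp(-‖x-y‖²/(4t))`. -/
def heatK (t : ℝ) (x y : E2) : ℝ := (4 * π * t)⁻¹ * Real.exp (-‖x - y‖^2 / (4 * t))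

/-- The kernel `N(t,x,y) = y ⬝ ∇_y H(t,x,y)`, the outward normal derivative in `y` of
the heat kernel on the unit circle; explicitly
`N(t,x,y) = (y ⬝ (x-y)) (8πt²)⁻¹ exp(-‖x-y‖²/(4t))`. -/
def Nker (t : ℝ) (x y : E2) : ℝ := ⟪y, gradient (fun z => heatK t x z) y⟫

lemma heatK_grad (t : ℝ) (ht : 0 < t) (x y : E2) :
    HasGradientAt (fun z => heatK t x z)
      (((8 * π * t^2)⁻¹ * Real.exp (-‖x - y‖^2 / (4 * t))) • (x - y)) y := by
  rw [hasGradientAt_iff_hasFDerivAt]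
  have h1 : HasFDerivAt (fun z : E2 => x - z) (-(ContinuousLinearMap.id ℝ E2)) y :=
    (hasFDerivAt_id y).const_sub x
  have h2 := h1.norm_sq
  have hg : HasDerivAt (fun u : ℝ => (4 * π * t)⁻¹ * Real.exp (-u / (4 * t)))
      ((4 * π * t)⁻¹ * (Real.exp (-‖x - y‖^2 / (4 * t)) * (-(4*t)⁻¹))) (‖x - y‖^2) := by
    have : HasDerivAt (fun u : ℝ => -u / (4 * t)) (-(4*t)⁻¹) (‖x - y‖^2) := by
      simpa [neg_div, div_eq_mul_inv] using
        ((hasDerivAt_id (‖x - y‖^2)).neg.div_const (4*t))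
    exact (this.exp).const_mul _
  have h3 := hg.comp_hasFDerivAt y h2
  refine h3.congr_fderiv ?_
  ext h
  have hπ := Real.pi_pos
  simp only [InnerProductSpace.toDual_apply_apply, ContinuousLinearMap.smul_apply,
    ContinuousLinearMap.comp_apply, ContinuousLinearMap.neg_apply, ContinuousLinearMap.id_apply,
    innerSL_apply_apply, real_inner_smul_left, inner_neg_right, smul_eq_mul]
  field_simp
  ring

lemma Nker_eq (t : ℝ) (ht : 0 < t) (x y : E2) :
    Nker t x y = (8 * π * t^2)⁻¹ * Real.exp (-‖x - y‖^2 / (4 * t)) * ⟪y, x - y⟫ := by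
  rw [Nker, (heatK_grad t ht x y).gradient, real_inner_smul_right]

lemma mul_exp_le (a u : ℝ) (ha : 0 < a) : u * Real.exp (-u / a) ≤ a := by
  have h : u / a ≤ Real.exp (u / a) :=
    le_trans (by linarith [Real.add_one_le_exp (u/a)]) le_rfl
  rw [neg_div, Real.exp_neg]
  rw [div_le_iff₀ ha] at h
  calc u * (Real.exp (u/a))⁻¹ ≤ (Real.exp (u/a) * a) * (Real.exp (u/a))⁻¹ := by
        apply mul_le_mul_of_nonneg_right h (by positivity)
    _ = a := by
        field_simp

lemma Nker_bound {t : ℝ} (ht : 0 < t) {x y : E2} (hx : ‖x‖ ≤ 1) (hy : ‖y‖ = 1) :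
    |Nker t x y| ≤ (8 * π * t^2)⁻¹ * (4*t + 3*Real.sqrt t) * Real.exp (-‖x - y‖^2 / (8 * t)) := by
  have hπ := Real.pi_pos
  set r := ‖x - y‖ with hr
  have hr0 : 0 ≤ r := norm_nonneg _
  -- inner product bound
  have hinn : |⟪y, x - y⟫| ≤ r^2/2 + r := by
    have h1 : ⟪y, x - y⟫ = ⟪y, x⟫ - 1 := by
      rw [inner_sub_right, real_inner_self_eq_norm_sq, hy]; norm_num
    have h2 : ⟪y, x⟫ ≤ 1 := by
      calc ⟪y, x⟫ ≤ ‖y‖ * ‖x‖ := real_inner_le_norm y x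
        _ ≤ 1 := by rw [hy]; simpa using hx
    have h3 : r^2 = ‖x‖^2 - 2*⟪x, y⟫ + ‖y‖^2 := by
      rw [hr]; exact norm_sub_sq_real x y
    have h4 : 1 - ‖x‖ ≤ r := by
      have := abs_norm_sub_norm_le y x
      rw [hy] at this
      have : 1 - ‖x‖ ≤ ‖y - x‖ := le_trans (le_abs_self _) this
      rwa [norm_sub_rev] at this
    have h5 : ⟪x, y⟫ = ⟪y, x⟫ := (real_inner_comm y x)
    have hx0 : 0 ≤ ‖x‖ := norm_nonneg x
    rw [h1, abs_of_nonpos (by linarith)]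
    rw [hy] at h3
    nlinarith [sq_nonneg (1 - ‖x‖)]
  have hexp : Real.exp (-r^2 / (4*t)) =
      Real.exp (-r^2 / (8*t)) * Real.exp (-r^2 / (8*t)) := by
    rw [← Real.exp_add]; ring_nf
  have hrr : r^2/2 * Real.exp (-r^2/(8*t)) ≤ 4*t := by
    have := mul_exp_le (8*t) (r^2) (by linarith)
    linarith
  have hr1 : r * Real.exp (-r^2/(8*t)) ≤ 3 * Real.sqrt t := by
    have hsq : (r * Real.exp (-r^2/(8*t)))^2 ≤ 8*t := by
      have h := mul_exp_le (4*t) (r^2) (by linarith)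
      have heq : (r * Real.exp (-r^2/(8*t)))^2 = r^2 * Real.exp (-(r^2)/(4*t)) := by
        rw [mul_pow, sq (Real.exp _), ← Real.exp_add]
        congr 1
        field_simp
        ring
      linarith [heq ▸ h]
    calc r * Real.exp (-r^2/(8*t)) ≤ Real.sqrt (8*t) := by
          exact Real.le_sqrt_of_sq_le hsq
      _ ≤ 3 * Real.sqrt t := by
          rw [show (8:ℝ)*t = 8*t from rfl, show (3:ℝ) * Real.sqrt t = Real.sqrt (9*t) by
            rw [show (9:ℝ)*t = 3^2*t by norm_num, Real.sqrt_mul (by positivity), Real.sqrt_sq (by norm_num)]]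
          exact Real.sqrt_le_sqrt (by linarith)
  have habs : |Nker t x y| = (8 * π * t^2)⁻¹ * Real.exp (-r^2 / (4*t)) * |⟪y, x - y⟫| := by
    rw [Nker_eq t ht x y, abs_mul, abs_mul, abs_of_nonneg (by positivity : (0:ℝ) ≤ (8 * π * t^2)⁻¹),
      abs_of_nonneg (Real.exp_nonneg _)]
  rw [habs, hexp]
  have hpos : (0:ℝ) < (8 * π * t^2)⁻¹ := by positivity
  calc (8 * π * t^2)⁻¹ * (Real.exp (-r^2/(8*t)) * Real.exp (-r^2/(8*t))) * |⟪y, x - y⟫|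
      ≤ (8 * π * t^2)⁻¹ * (Real.exp (-r^2/(8*t)) * Real.exp (-r^2/(8*t))) * (r^2/2 + r) := by
        apply mul_le_mul_of_nonneg_left hinn (by positivity)
    _ = (8 * π * t^2)⁻¹ * ((r^2/2 * Real.exp (-r^2/(8*t))) + (r * Real.exp (-r^2/(8*t))))
          * Real.exp (-r^2/(8*t)) := by ring
    _ ≤ (8 * π * t^2)⁻¹ * (4*t + 3*Real.sqrt t) * Real.exp (-r^2/(8*t)) := by
        apply mul_le_mul_of_nonneg_right _ (Real.exp_nonneg _)
        apply mul_le_mul_of_nonneg_left _ hpos.le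
        linarith
    _ = (8 * π * t^2)⁻¹ * (4*t + 3*Real.sqrt t) * Real.exp (-r^2 / (8*t)) := by ring_nf

def cpar (θ : ℝ) : E2 := WithLp.toLp 2 ![Real.cos θ, Real.sin θ]

lemma E2_norm_sq (u : E2) : ‖u‖^2 = (u 0)^2 + (u 1)^2 := by
  rw [EuclideanSpace.norm_eq, Real.sq_sqrt (by positivity)]
  simp [Fin.sum_univ_two, sq_abs]

lemma cpar_sub_norm (a b : ℝ) : ‖cpar a - cpar b‖^2 = 2 - 2 * Real.cos (a - b) := by
  have h0 : (cpar a - cpar b) 0 = Real.cos a - Real.cos b := rfl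
  have h1 : (cpar a - cpar b) 1 = Real.sin a - Real.sin b := rfl
  rw [E2_norm_sq, h0, h1, Real.cos_sub]
  nlinarith [Real.sin_sq_add_cos_sq a, Real.sin_sq_add_cos_sq b]

lemma cpar_mem_sphere (θ : ℝ) : cpar θ ∈ sphere (0:E2) 1 := by
  rw [mem_sphere_zero_iff_norm]
  have h : ‖cpar θ‖^2 = 1 := by
    rw [E2_norm_sq]
    show Real.cos θ^2 + Real.sin θ^2 = 1
    rw [add_comm]; exact Real.sin_sq_add_cos_sq θ
  nlinarith [norm_nonneg (cpar θ)]

lemma cpar_lipschitz : LipschitzWith 1 cpar := by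
  apply LipschitzWith.of_dist_le_mul
  intro a b
  rw [dist_eq_norm, Real.dist_eq, NNReal.coe_one, one_mul]
  have h := cpar_sub_norm a b
  have h2 : ‖cpar a - cpar b‖^2 ≤ |a - b|^2 := by
    rw [h]
    have := Real.one_sub_sq_div_two_le_cos (x := a - b)
    rw [sq_abs]
    linarith
  calc ‖cpar a - cpar b‖ = Real.sqrt (‖cpar a - cpar b‖^2) := by
        rw [Real.sqrt_sq (norm_nonneg _)]
    _ ≤ Real.sqrt (|a-b|^2) := Real.sqrt_le_sqrt h2
    _ = |a - b| := Real.sqrt_sq (abs_nonneg _)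

lemma cpar_chord_lower {a b : ℝ} (h : |a - b| ≤ π) :
    (2/π) * |a - b| ≤ ‖cpar a - cpar b‖ := by
  have hs : ‖cpar a - cpar b‖^2 = 4 * Real.sin ((a-b)/2)^2 := by
    rw [cpar_sub_norm, Real.sin_sq_eq_half_sub]
    rw [show 2 * ((a-b)/2) = a - b by ring]
    ring
  have hj : (2/π) * |(a-b)/2| ≤ |Real.sin ((a-b)/2)| := by
    apply Real.mul_abs_le_abs_sin
    rw [abs_div, abs_two]
    linarith [abs_nonneg (a-b)]
  have h2 : ((2/π) * |a-b|)^2 ≤ ‖cpar a - cpar b‖^2 := by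
    rw [hs]
    have hπ := Real.pi_pos
    have : (2/π) * |a - b| = 2 * ((2/π) * |(a-b)/2|) := by
      rw [abs_div, abs_two]; ring
    rw [this]
    calc (2 * ((2/π) * |(a-b)/2|))^2 ≤ (2 * |Real.sin ((a-b)/2)|)^2 := by
          apply pow_le_pow_left₀ (by positivity)
          have h0 : 0 ≤ (2/π) * |(a-b)/2| := by positivity
          linarith
      _ = 4 * Real.sin ((a-b)/2)^2 := by rw [mul_pow, sq_abs]; norm_num
  have hπ := Real.pi_pos
  have hL : 0 ≤ (2/π) * |a-b| := by positivity
  nlinarith [norm_nonneg (cpar a - cpar b)]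

lemma cpar_surj {y : E2} (hy : y ∈ sphere (0:E2) 1) (a : ℝ) :
    ∃ θ ∈ Ico a (a + 2*π), cpar θ = y := by
  have hy1 : (y 0)^2 + (y 1)^2 = 1 := by
    have := mem_sphere_zero_iff_norm.mp hy
    have h := E2_norm_sq y
    rw [this] at h; linarith
  set z : ℂ := ⟨y 0, y 1⟩ with hz
  have hzabs : ‖z‖ = 1 := by
    simp only [Complex.norm_def, Complex.normSq_mk, hz]
    rw [show y 0 * y 0 + y 1 * y 1 = 1 by nlinarith]
    exact Real.sqrt_one
  have hz0 : z ≠ 0 := by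
    intro h; rw [h] at hzabs; simp at hzabs
  have hcos : Real.cos (Complex.arg z) = y 0 := by
    rw [Complex.cos_arg hz0, hzabs]; simp [hz]
  have hsin : Real.sin (Complex.arg z) = y 1 := by
    rw [Complex.sin_arg, hzabs]; simp [hz]
  refine ⟨toIcoMod Real.two_pi_pos a (Complex.arg z), toIcoMod_mem_Ico _ a _, ?_⟩
  have hmod : toIcoMod Real.two_pi_pos a (Complex.arg z)
      = Complex.arg z + (-(toIcoDiv Real.two_pi_pos a (Complex.arg z)) : ℤ) * (2*π) := by
    rw [toIcoMod]
    push_cast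
    rw [zsmul_eq_mul]
    ring
  ext i
  fin_cases i
  · show Real.cos _ = y 0
    rw [hmod, Real.cos_add_int_mul_two_pi, hcos]
  · show Real.sin _ = y 1
    rw [hmod, Real.sin_add_int_mul_two_pi, hsin]

lemma cpar_continuous : Continuous cpar := by
  apply (PiLp.continuous_toLp 2 _).comp
  apply continuous_pi
  intro i
  fin_cases i
  · exact Real.continuous_cos
  · exact Real.continuous_sin

lemma sphere_measure_le (a : ℝ) :
    (μH[1] : Measure E2).restrict (sphere 0 1) ≤
      Measure.map cpar (volume.restrict (Ico a (a + 2*π))) := by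
  rw [Measure.le_iff]
  intro s hs
  rw [Measure.restrict_apply hs,
    Measure.map_apply cpar_continuous.measurable hs,
    Measure.restrict_apply (cpar_continuous.measurable hs)]
  have hsub : s ∩ sphere (0:E2) 1 ⊆ cpar '' (cpar ⁻¹' s ∩ Ico a (a + 2*π)) := by
    rintro y ⟨hys, hysph⟩
    obtain ⟨θ, hθI, hθ⟩ := cpar_surj hysph a
    exact ⟨θ, ⟨by rw [mem_preimage, hθ]; exact hys, hθI⟩, hθ⟩
  calc μH[1] (s ∩ sphere (0:E2) 1) ≤ μH[1] (cpar '' (cpar ⁻¹' s ∩ Ico a (a + 2*π))) :=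
        measure_mono hsub
    _ ≤ ((1:NNReal):ENNReal)^(1:ℝ) * μH[1] (cpar ⁻¹' s ∩ Ico a (a + 2*π)) :=
        cpar_lipschitz.hausdorffMeasure_image_le (by norm_num) _
    _ = volume (cpar ⁻¹' s ∩ Ico a (a + 2*π)) := by
        rw [MeasureTheory.hausdorffMeasure_real]
        simp

set_option maxHeartbeats 1000000 in
/-- There is `C > 0` such that for all `t > 0` and all `x` in the closed unit disk,
`∫_{S¹} |N(t,x,y)| dσ(y) ≤ C t⁻¹`, where `σ` is arclength (one-dimensional
Hausdorff) measure on the unit circle. -/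
theorem stmt12 : ∃ C > (0:ℝ), ∀ t > (0:ℝ), ∀ x : E2, ‖x‖ ≤ 1 →
    (∫ y in sphere (0:E2) 1, |Nker t x y| ∂(μH[1])) ≤ C * t⁻¹ := by
  refine ⟨10, by norm_num, fun t ht x hx => ?_⟩
  have hπ := Real.pi_pos
  -- choose base point θ₀
  obtain ⟨θ₀, hθ₀⟩ : ∃ θ₀ : ℝ, ∀ y ∈ sphere (0:E2) 1, ‖cpar θ₀ - y‖ ≤ 2 * ‖x - y‖ := by
    by_cases hx0 : x = 0
    · refine ⟨0, fun y hy => ?_⟩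
      rw [mem_sphere_zero_iff_norm] at hy
      have h1 : ‖cpar 0‖ = 1 := mem_sphere_zero_iff_norm.mp (cpar_mem_sphere 0)
      calc ‖cpar 0 - y‖ ≤ ‖cpar 0‖ + ‖y‖ := norm_sub_le _ _
        _ = 2 * ‖x - y‖ := by rw [hx0, zero_sub, norm_neg, h1, hy]; norm_num
    · have hxn : 0 < ‖x‖ := norm_pos_iff.mpr hx0
      have hy₀ : ‖x‖⁻¹ • x ∈ sphere (0:E2) 1 := by
        rw [mem_sphere_zero_iff_norm, norm_smul, norm_inv, norm_norm,
          inv_mul_cancel₀ hxn.ne']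
      obtain ⟨θ₀, _, hθ₀⟩ := cpar_surj hy₀ 0
      refine ⟨θ₀, fun y hy => ?_⟩
      rw [mem_sphere_zero_iff_norm] at hy
      have hd : ‖(‖x‖⁻¹ • x) - x‖ = 1 - ‖x‖ := by
        have : (‖x‖⁻¹ • x) - x = (‖x‖⁻¹ - 1) • x := by rw [sub_smul, one_smul]
        rw [this, norm_smul, Real.norm_eq_abs, abs_of_nonneg (by
          rw [sub_nonneg]; exact (one_le_inv₀ hxn).mpr hx)]
        field_simp
      have hxy : 1 - ‖x‖ ≤ ‖x - y‖ := by
        have h := abs_norm_sub_norm_le y x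
        rw [hy] at h
        have := le_trans (le_abs_self _) h
        rwa [norm_sub_rev] at this
      calc ‖cpar θ₀ - y‖ = ‖(‖x‖⁻¹ • x) - y‖ := by rw [hθ₀]
        _ ≤ ‖(‖x‖⁻¹ • x) - x‖ + ‖x - y‖ := by
            have := dist_triangle (‖x‖⁻¹ • x) x y
            simpa [dist_eq_norm] using this
        _ ≤ 2 * ‖x - y‖ := by rw [hd]; linarith
  set I : Set ℝ := Ico (θ₀ - π) (θ₀ - π + 2*π) with hI
  set μ : Measure E2 := (μH[1] : Measure E2).restrict (sphere (0:E2) 1) with hμ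
  set ν : Measure ℝ := volume.restrict I with hν
  have hle : μ ≤ Measure.map cpar ν := sphere_measure_le (θ₀ - π)
  have hνuniv : Measure.map cpar ν univ = ENNReal.ofReal (2*π) := by
    rw [Measure.map_apply cpar_continuous.measurable MeasurableSet.univ, preimage_univ,
      hν, Measure.restrict_apply_univ, hI, Real.volume_Ico]
    norm_num
  haveI hfinμ : IsFiniteMeasure μ := by
    constructor
    calc μ univ ≤ Measure.map cpar ν univ := Measure.le_iff'.mp hle univ
      _ < ⊤ := by rw [hνuniv]; exact ENNReal.ofReal_lt_top
  set M : ℝ := (8 * π * t^2)⁻¹ * (4*t + 3*Real.sqrt t) with hM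
  have hM0 : 0 ≤ M := by positivity
  have hcf : Continuous (fun y : E2 => Real.exp (-‖x - y‖^2 / (8*t))) := by
    apply Real.continuous_exp.comp
    apply Continuous.div_const
    exact ((continuous_const.sub continuous_id).norm.pow 2).neg
  -- Step 1: compare with the Gaussian bound B
  have step1 : (∫ y in sphere (0:E2) 1, |Nker t x y| ∂(μH[1])) ≤
      ∫ y in sphere (0:E2) 1, M * Real.exp (-‖x - y‖^2 / (8*t)) ∂(μH[1]) := by
    apply integral_mono_of_nonneg (ae_of_all _ fun y => abs_nonneg _)
    · apply Integrable.mono' (integrable_const M)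
      · exact (continuous_const.mul hcf).aestronglyMeasurable
      · apply ae_of_all
        intro y
        rw [Real.norm_eq_abs, abs_of_nonneg (by positivity)]
        calc M * Real.exp (-‖x - y‖^2/(8*t)) ≤ M * 1 :=
              mul_le_mul_of_nonneg_left (Real.exp_le_one_iff.mpr (by
                have h1 : (0:ℝ) ≤ ‖x - y‖^2 := by positivity
                have ht8 : (0:ℝ) < 8*t := by linarith
                exact div_nonpos_of_nonpos_of_nonneg (by linarith) ht8.le)) hM0
          _ = M := mul_one M
    · rw [EventuallyLE, ae_restrict_iff' isClosed_sphere.measurableSet]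
      apply ae_of_all
      intro y hy
      exact Nker_bound ht hx (mem_sphere_zero_iff_norm.mp hy)
  -- Step 2: pull out the constant
  have step2 : (∫ y in sphere (0:E2) 1, M * Real.exp (-‖x - y‖^2 / (8*t)) ∂(μH[1]))
      = M * ∫ y in sphere (0:E2) 1, Real.exp (-‖x - y‖^2 / (8*t)) ∂(μH[1]) :=
    integral_const_mul M _
  -- Step 3: the exponential integral over the sphere
  have hfm : AEStronglyMeasurable (fun y : E2 => Real.exp (-‖x - y‖^2 / (8*t))) μ :=
    hcf.aestronglyMeasurable
  have hint : (∫ y in sphere (0:E2) 1, Real.exp (-‖x - y‖^2 / (8*t)) ∂(μH[1]))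
      = (∫⁻ y, ENNReal.ofReal (Real.exp (-‖x - y‖^2 / (8*t))) ∂μ).toReal := by
    rw [← hμ]
    exact integral_eq_lintegral_of_nonneg_ae (ae_of_all _ fun y => Real.exp_nonneg _) hfm
  have hmeas1 : Measurable (fun y : E2 => ENNReal.ofReal (Real.exp (-‖x - y‖^2 / (8*t)))) :=
    ENNReal.measurable_ofReal.comp hcf.measurable
  have hlin1 : (∫⁻ y, ENNReal.ofReal (Real.exp (-‖x - y‖^2 / (8*t))) ∂μ)
      ≤ ∫⁻ θ in I, ENNReal.ofReal (Real.exp (-‖x - cpar θ‖^2 / (8*t))) ∂volume := by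
    calc (∫⁻ y, ENNReal.ofReal (Real.exp (-‖x - y‖^2 / (8*t))) ∂μ)
        ≤ ∫⁻ y, ENNReal.ofReal (Real.exp (-‖x - y‖^2 / (8*t))) ∂(Measure.map cpar ν) :=
          lintegral_mono' hle le_rfl
      _ = ∫⁻ θ in I, ENNReal.ofReal (Real.exp (-‖x - cpar θ‖^2 / (8*t))) ∂volume := by
          rw [lintegral_map hmeas1 cpar_continuous.measurable]
  have hlin2 : (∫⁻ θ in I, ENNReal.ofReal (Real.exp (-‖x - cpar θ‖^2 / (8*t))) ∂volume)
      ≤ ∫⁻ θ in I, ENNReal.ofReal (Real.exp (-(θ - θ₀)^2 / (8*π^2*t))) ∂volume := by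
    apply setLIntegral_mono
    · apply ENNReal.measurable_ofReal.comp
      apply (Real.continuous_exp.comp ?_).measurable
      apply Continuous.div_const
      exact ((continuous_id.sub continuous_const).pow 2).neg
    · intro θ hθ
      apply ENNReal.ofReal_le_ofReal
      apply Real.exp_le_exp.mpr
      have habs : |θ - θ₀| ≤ π := by
        rw [hI] at hθ
        rw [abs_le]
        constructor <;> [linarith [hθ.1]; linarith [hθ.2]]
      have hchord : (2/π) * |θ - θ₀| ≤ 2 * ‖x - cpar θ‖ := by
        calc (2/π) * |θ - θ₀| ≤ ‖cpar θ - cpar θ₀‖ := cpar_chord_lower habs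
          _ = ‖cpar θ₀ - cpar θ‖ := norm_sub_rev _ _
          _ ≤ 2 * ‖x - cpar θ‖ := hθ₀ (cpar θ) (cpar_mem_sphere θ)
      have h1 : |θ - θ₀| ≤ π * ‖x - cpar θ‖ := by
        rw [div_mul_eq_mul_div, div_le_iff₀ hπ] at hchord
        nlinarith
      have hsq : (θ - θ₀)^2 ≤ π^2 * ‖x - cpar θ‖^2 := by
        nlinarith [pow_le_pow_left₀ (abs_nonneg (θ - θ₀)) h1 2, sq_abs (θ - θ₀)]
      rw [div_le_div_iff₀ (by positivity) (by positivity)]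
      have ht8 : (0:ℝ) < 8*t := by linarith
      rw [neg_mul, neg_mul, neg_le_neg_iff]
      calc (θ - θ₀)^2 * (8*t) ≤ (π^2 * ‖x - cpar θ‖^2) * (8*t) := by nlinarith
        _ = ‖x - cpar θ‖^2 * (8*π^2*t) := by ring
  set L : ENNReal := ∫⁻ θ in I, ENNReal.ofReal (Real.exp (-(θ - θ₀)^2 / (8*π^2*t))) ∂volume
    with hL
  have hA : L ≤ ENNReal.ofReal (2*π) := by
    calc L ≤ ∫⁻ _ in I, 1 ∂volume := by
          apply setLIntegral_mono' measurableSet_Ico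
          intro θ _
          apply ENNReal.ofReal_le_one.mpr
          apply Real.exp_le_one_iff.mpr
          apply div_nonpos_of_nonpos_of_nonneg (neg_nonpos.mpr (by positivity)) (by positivity)
      _ = volume I := by rw [setLIntegral_const, one_mul]
      _ = ENNReal.ofReal (2*π) := by rw [hI, Real.volume_Ico]; norm_num
  have hgauss_int : Integrable (fun θ : ℝ => Real.exp (-(8*π^2*t)⁻¹ * (θ - θ₀)^2)) := by
    exact (integrable_exp_neg_mul_sq (by positivity)).comp_sub_right θ₀
  have hgform : ∀ θ : ℝ, Real.exp (-(θ - θ₀)^2 / (8*π^2*t))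
      = Real.exp (-(8*π^2*t)⁻¹ * (θ - θ₀)^2) := by
    intro θ
    congr 1
    field_simp
  have hB : L ≤ ENNReal.ofReal (Real.sqrt (8*π^3*t)) := by
    calc L ≤ ∫⁻ θ, ENNReal.ofReal (Real.exp (-(θ - θ₀)^2 / (8*π^2*t))) ∂volume :=
          setLIntegral_le_lintegral _ _
      _ = ENNReal.ofReal (∫ θ : ℝ, Real.exp (-(8*π^2*t)⁻¹ * (θ - θ₀)^2)) := by
          simp_rw [hgform]
          rw [ofReal_integral_eq_lintegral_ofReal hgauss_int
            (ae_of_all _ fun θ => Real.exp_nonneg _)]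
      _ = ENNReal.ofReal (Real.sqrt (π / (8*π^2*t)⁻¹)) := by
          rw [MeasureTheory.integral_sub_right_eq_self
            (fun s => Real.exp (-(8*π^2*t)⁻¹ * s^2)) θ₀, integral_gaussian]
      _ ≤ ENNReal.ofReal (Real.sqrt (8*π^3*t)) := by
          apply ENNReal.ofReal_le_ofReal
          apply Real.sqrt_le_sqrt
          apply le_of_eq
          field_simp
  have hLne : L ≠ ⊤ := ne_top_of_le_ne_top ENNReal.ofReal_ne_top hA
  -- the exponential integral over the sphere is at most L.toReal
  have hexpint : (∫ y in sphere (0:E2) 1, Real.exp (-‖x - y‖^2 / (8*t)) ∂(μH[1]))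
      ≤ L.toReal := by
    rw [hint]
    exact ENNReal.toReal_mono hLne (le_trans hlin1 hlin2)
  have hchain : (∫ y in sphere (0:E2) 1, |Nker t x y| ∂(μH[1])) ≤ M * L.toReal := by
    calc (∫ y in sphere (0:E2) 1, |Nker t x y| ∂(μH[1]))
        ≤ M * ∫ y in sphere (0:E2) 1, Real.exp (-‖x - y‖^2 / (8*t)) ∂(μH[1]) := by
          rw [← step2]; exact step1
      _ ≤ M * L.toReal := mul_le_mul_of_nonneg_left hexpint hM0
  rcases le_or_gt 1 t with h1t | h1t
  · -- t ≥ 1 : use the 2π bound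
    have hst : Real.sqrt t ≤ t := by
      rw [Real.sqrt_le_left (by linarith)]
      nlinarith
    have hLt : L.toReal ≤ 2*π := by
      calc L.toReal ≤ (ENNReal.ofReal (2*π)).toReal := ENNReal.toReal_mono
            ENNReal.ofReal_ne_top hA
        _ = 2*π := ENNReal.toReal_ofReal (by positivity)
    calc (∫ y in sphere (0:E2) 1, |Nker t x y| ∂(μH[1])) ≤ M * L.toReal := hchain
      _ ≤ M * (2*π) := mul_le_mul_of_nonneg_left hLt hM0
      _ ≤ ((8*π*t^2)⁻¹ * (7*t)) * (2*π) := by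
          apply mul_le_mul_of_nonneg_right _ (by positivity)
          apply mul_le_mul_of_nonneg_left (by nlinarith) (by positivity)
      _ = 7/(4*t) := by field_simp; ring
      _ ≤ 10 * t⁻¹ := by
          rw [← div_eq_mul_inv, div_le_div_iff₀ (by linarith) (by linarith)]
          nlinarith
  · -- t < 1 : use the Gaussian bound
    have hts : t ≤ Real.sqrt t := by
      have h1 : Real.sqrt t ≤ 1 := Real.sqrt_le_one.mpr h1t.le
      nlinarith [Real.mul_self_sqrt ht.le, Real.sqrt_nonneg t]
    have hsq8 : Real.sqrt (8*π^3*t) ≤ 16 * Real.sqrt t := by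
      rw [show 8*π^3*t = (8*π^3)*t by ring, Real.sqrt_mul (by positivity)]
      apply mul_le_mul_of_nonneg_right _ (Real.sqrt_nonneg t)
      rw [show (16:ℝ) = Real.sqrt 256 by
        rw [show (256:ℝ) = 16^2 by norm_num, Real.sqrt_sq (by norm_num)]]
      apply Real.sqrt_le_sqrt
      have hp3 : π^3 ≤ 3.15^3 := pow_le_pow_left₀ Real.pi_pos.le Real.pi_lt_d2.le 3
      nlinarith [hp3]
    have hLt : L.toReal ≤ 16 * Real.sqrt t := by
      calc L.toReal ≤ (ENNReal.ofReal (Real.sqrt (8*π^3*t))).toReal :=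
            ENNReal.toReal_mono ENNReal.ofReal_ne_top hB
        _ = Real.sqrt (8*π^3*t) := ENNReal.toReal_ofReal (Real.sqrt_nonneg _)
        _ ≤ 16 * Real.sqrt t := hsq8
    have hst2 : Real.sqrt t * Real.sqrt t = t := Real.mul_self_sqrt ht.le
    calc (∫ y in sphere (0:E2) 1, |Nker t x y| ∂(μH[1])) ≤ M * L.toReal := hchain
      _ ≤ M * (16 * Real.sqrt t) := mul_le_mul_of_nonneg_left hLt hM0
      _ ≤ ((8*π*t^2)⁻¹ * (7*Real.sqrt t)) * (16 * Real.sqrt t) := by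
          apply mul_le_mul_of_nonneg_right _ (by positivity)
          apply mul_le_mul_of_nonneg_left (by nlinarith) (by positivity)
      _ = ((8*π)⁻¹ * 112) * t⁻¹ := by
          rw [show ((8*π*t^2)⁻¹ * (7*Real.sqrt t)) * (16 * Real.sqrt t)
              = (8*π*t^2)⁻¹ * 112 * (Real.sqrt t * Real.sqrt t) by ring, hst2,
            show 8*π*t^2 = (8*π)*(t*t) by ring, mul_inv, mul_inv]
          field_simp
      _ ≤ 10 * t⁻¹ := by
          apply mul_le_mul_of_nonneg_right _ (by positivity)
          rw [inv_mul_le_iff₀ (by positivity)]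
          nlinarith [Real.pi_gt_three]
end
end
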